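/- Let x, t, k be natural numbers with 2^k ≤ x. Then ⌊t / 2^k⌋ < ⌊(x + t) / 2^k⌋. Consequently, for a positive field value x with magnitude at least 2^k, whenever the stochastic sign test is correct (no modular overflow, so ⟨x⟩_s = x + t), the truncated stochastic sign test is also correct, i.e. truncation by k bits introduces no additional faults for positive inputs of magnitude at least 2^k. -/

import Mathlib

/-- If `2^k ≤ x` then `⌊t / 2^k⌋ < ⌊(x + t) / 2^k⌋`: for a positive field value
of magnitude at least `2^k`, whenever the stochastic sign test is correct (no
modular overflow, so the server's share is `x + t`), the `k`-bit truncated test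
is also correct. -/
theorem truncated_sign_no_new_fault_pos_large (x t k : ℕ) (hx : 2 ^ k ≤ x) :
    t / 2 ^ k < (x + t) / 2 ^ k := by
  calc t / 2 ^ k < t / 2 ^ k + 1 := Nat.lt_succ_self _
    _ = (t + 2 ^ k) / 2 ^ k := (Nat.add_div_right t (Nat.two_pow_pos k)).symm
    _ ≤ (x + t) / 2 ^ k := Nat.div_le_div_right (by omega)
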